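/- Fix η ∈ ℝ^m, assume the local domination hypothesis at η, and suppose F_η is invertible and ε > 0. Let l(η') = uKL(q_{η'} ∣ π) and φ(η) = F_η⁻¹ z_η. Then the relaxed fixed-point iterate satisfies ε φ(η) + (1 − ε) η = η − (ε / Z_η) F_η⁻¹ ∇l(η), where ∇l(η) is the gradient of l at η; that is, one step of the LSVI recursion with step size ε equals one natural-gradient-descent step on the unnormalised KL objective with step size ε / Z_η. -/

import Mathlib

open MeasureTheory Matrix

noncomputable section

/-- The continuous linear functional `v ↦ g ⬝ᵥ v` on `ℝ^m`, used to express gradients. -/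
def dotCLM {m : ℕ} (g : Fin m → ℝ) : (Fin m → ℝ) →L[ℝ] ℝ :=
  ∑ i, g i • ContinuousLinearMap.proj i

lemma dotCLM_apply {m : ℕ} (g v : Fin m → ℝ) : dotCLM g v = g ⬝ᵥ v := by
  simp [dotCLM, dotProduct]

lemma dotCLM_smul {m : ℕ} (c : ℝ) (v : Fin m → ℝ) : dotCLM (c • v) = c • dotCLM v := by
  ext u
  simp [dotCLM_apply, smul_dotProduct]

lemma norm_dotCLM_le {m : ℕ} (v : Fin m → ℝ) : ‖dotCLM v‖ ≤ ∑ i, |v i| := by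
  refine ContinuousLinearMap.opNorm_le_bound _ (by positivity) fun u => ?_
  rw [dotCLM_apply]
  calc ‖v ⬝ᵥ u‖ ≤ ∑ i, |v i * u i| := Finset.abs_sum_le_sum_abs _ _
    _ ≤ ∑ i, |v i| * ‖u‖ := by
        refine Finset.sum_le_sum fun i _ => ?_
        rw [abs_mul]
        exact mul_le_mul_of_nonneg_left (norm_le_pi_norm u i) (abs_nonneg _)
    _ = (∑ i, |v i|) * ‖u‖ := (Finset.sum_mul _ _ _).symm

lemma continuous_dotCLM {m : ℕ} : Continuous (dotCLM (m := m)) :=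
  continuous_finset_sum _ fun i _ => (continuous_apply i).smul continuous_const

lemma sum_abs_le_card_mul {m : ℕ} (v : Fin m → ℝ) :
    ∑ i, |v i| ≤ (m : ℝ) * (1 + ∑ i, (v i) ^ 2) := by
  have h : ∀ i : Fin m, |v i| ≤ 1 + ∑ j, (v j) ^ 2 := by
    intro i
    have h1 : |v i| ≤ 1 + (v i) ^ 2 := by nlinarith [sq_nonneg (|v i| - 1), sq_abs (v i)]
    have h2 : (v i) ^ 2 ≤ ∑ j, (v j) ^ 2 :=
      Finset.single_le_sum (fun j _ => sq_nonneg (v j)) (Finset.mem_univ i)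
    linarith
  calc ∑ i, |v i| ≤ ∑ _i : Fin m, (1 + ∑ j, (v j) ^ 2) := Finset.sum_le_sum fun i _ => h i
    _ = (m : ℝ) * (1 + ∑ j, (v j) ^ 2) := by
        rw [Finset.sum_const, Finset.card_univ, Fintype.card_fin, nsmul_eq_mul]

lemma hasFDerivAt_dotProduct {m : ℕ} (v y : Fin m → ℝ) :
    HasFDerivAt (fun w : Fin m → ℝ => w ⬝ᵥ v) (dotCLM v) y := by
  have h := (dotCLM v).hasFDerivAt (x := y)
  have he : (fun w : Fin m → ℝ => w ⬝ᵥ v) = fun w => dotCLM v w :=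
    funext fun w => by rw [dotCLM_apply, dotProduct_comm]
  rw [he]; exact h

lemma hasFDerivAt_expdot {m : ℕ} (v y : Fin m → ℝ) :
    HasFDerivAt (fun w : Fin m → ℝ => Real.exp (w ⬝ᵥ v))
      (Real.exp (y ⬝ᵥ v) • dotCLM v) y := (hasFDerivAt_dotProduct v y).exp

lemma hasFDerivAt_main {m : ℕ} (v : Fin m → ℝ) (c : ℝ) (y : Fin m → ℝ) :
    HasFDerivAt (fun w : Fin m → ℝ => Real.exp (w ⬝ᵥ v) * (w ⬝ᵥ v - c))
      (((y ⬝ᵥ v - c + 1) * Real.exp (y ⬝ᵥ v)) • dotCLM v) y := by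
  have h := (hasFDerivAt_expdot v y).mul ((hasFDerivAt_dotProduct v y).sub_const c)
  refine h.congr_fderiv ?_
  ext u
  simp [dotCLM_apply]
  ring

set_option maxHeartbeats 2000000 in
/-- Under the local domination hypothesis at `η`, if `F_η` is invertible
and `ε > 0`, then the relaxed fixed-point iterate satisfies
`ε φ(η) + (1 − ε) η = η − (ε / Z_η) F_η⁻¹ ∇l(η)`, where `φ(η) = F_η⁻¹ z_η` and `∇l(η)` is
the gradient of `l : η' ↦ uKL(q_{η'} ∣ π)` at `η`: one LSVI step of size `ε` equals one
natural-gradient-descent step on the unnormalised KL objective of size `ε / Z_η`. -/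
theorem stmt5
    {X : Type*} [MeasurableSpace X] (μ : Measure X) [SigmaFinite μ]
    {m : ℕ} [NeZero m] (s : X → Fin m → ℝ) (hs : Measurable s)
    (hs1 : ∀ x, s x 0 = 1)
    (f : X → ℝ) (hf : Measurable f)
    (hπ0 : 0 < ∫ x, Real.exp (f x) ∂μ)
    (hπ1 : Integrable (fun x => Real.exp (f x)) μ)
    (η : Fin m → ℝ)
    -- local domination hypothesis at `η`
    (U : Set (Fin m → ℝ)) (hU : U ∈ nhds η)
    (g : X → ℝ) (hg : Integrable g μ)
    (hdom : ∀ η' ∈ U, ∀ᵐ x ∂μ,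
      (1 + ∑ i, (s x i) ^ 2) * (1 + |η' ⬝ᵥ s x| + |f x|) * Real.exp (η' ⬝ᵥ s x) ≤ g x)
    -- `Z_η`, `F_η`, `z_η`
    (Z : ℝ) (hZ : Z = ∫ x, Real.exp (η ⬝ᵥ s x) ∂μ)
    (F : Matrix (Fin m) (Fin m) ℝ)
    (hF : F = Z⁻¹ • Matrix.of fun i j => ∫ x, s x i * s x j * Real.exp (η ⬝ᵥ s x) ∂μ)
    (z : Fin m → ℝ) (hz : z = Z⁻¹ • fun i => ∫ x, f x * s x i * Real.exp (η ⬝ᵥ s x) ∂μ)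
    (hFinv : IsUnit F.det)
    (ε : ℝ) (hε : 0 < ε)
    -- `∇l(η)`: the gradient of the uKL objective at `η`
    (gradl : Fin m → ℝ)
    (hgrad : HasFDerivAt
      (fun η' : Fin m → ℝ =>
        (∫ x, Real.exp (η' ⬝ᵥ s x) * (η' ⬝ᵥ s x - f x) ∂μ)
          + (∫ x, Real.exp (f x) ∂μ) - ∫ x, Real.exp (η' ⬝ᵥ s x) ∂μ)
      (dotCLM gradl) η) :
    ε • (F⁻¹ *ᵥ z) + (1 - ε) • η = η - (ε / Z) • (F⁻¹ *ᵥ gradl) := by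
  -- basic measurability
  have hmdot : ∀ y : Fin m → ℝ, Measurable fun x => y ⬝ᵥ s x := by
    intro y
    exact Finset.measurable_sum _ fun i _ => measurable_const.mul ((measurable_pi_apply i).comp hs)
  have hmexp : ∀ y : Fin m → ℝ, Measurable fun x => Real.exp (y ⬝ᵥ s x) :=
    fun y => Real.measurable_exp.comp (hmdot y)
  have hmsi : ∀ i, Measurable fun x => s x i := fun i => (measurable_pi_apply i).comp hs
  -- ball inside U
  obtain ⟨r, hr, hball⟩ : ∃ r > 0, Metric.ball η r ⊆ U := Metric.mem_nhds_iff.mp hU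
  have hηU : η ∈ U := mem_of_mem_nhds hU
  -- uniform a.e. domination on the ball
  have hdomball : ∀ᵐ x ∂μ, ∀ y ∈ Metric.ball η r,
      (1 + ∑ i, (s x i) ^ 2) * (1 + |y ⬝ᵥ s x| + |f x|) * Real.exp (y ⬝ᵥ s x) ≤ g x := by
    obtain ⟨t, htc, htd⟩ := TopologicalSpace.exists_countable_dense (Metric.ball η r)
    set D : Set (Fin m → ℝ) := Subtype.val '' t with hD
    have hDc : D.Countable := htc.image _
    have hDsub : D ⊆ Metric.ball η r := by rintro _ ⟨y, -, rfl⟩; exact y.2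
    have hDdense : Metric.ball η r ⊆ closure D := by
      intro y hy
      have h1 : (⟨y, hy⟩ : Metric.ball η r) ∈ closure t := htd _
      have h2 : y ∈ Subtype.val '' closure t := ⟨⟨y, hy⟩, h1, rfl⟩
      exact (image_closure_subset_closure_image continuous_subtype_val) h2
    have hae : ∀ᵐ x ∂μ, ∀ y ∈ D,
        (1 + ∑ i, (s x i) ^ 2) * (1 + |y ⬝ᵥ s x| + |f x|) * Real.exp (y ⬝ᵥ s x) ≤ g x :=
      (ae_ball_iff hDc).mpr fun y hy => hdom y (hball (hDsub hy))
    filter_upwards [hae] with x hx y hy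
    have hc : Continuous fun y : Fin m → ℝ => y ⬝ᵥ s x := by
      have : (fun y : Fin m → ℝ => y ⬝ᵥ s x) = fun y => dotCLM (s x) y :=
        funext fun y => by rw [dotCLM_apply, dotProduct_comm]
      rw [this]; exact (dotCLM (s x)).continuous
    have hcl : IsClosed {y : Fin m → ℝ |
        (1 + ∑ i, (s x i) ^ 2) * (1 + |y ⬝ᵥ s x| + |f x|) * Real.exp (y ⬝ᵥ s x) ≤ g x} := by
      apply isClosed_le _ continuous_const
      exact ((continuous_const.mul ((continuous_const.add hc.abs).add continuous_const)).mul
        (Real.continuous_exp.comp hc))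
    have : closure D ⊆ {y : Fin m → ℝ |
        (1 + ∑ i, (s x i) ^ 2) * (1 + |y ⬝ᵥ s x| + |f x|) * Real.exp (y ⬝ᵥ s x) ≤ g x} :=
      closure_minimal hx hcl
    exact this (hDdense hy)
  -- key pointwise bounds
  have hQ1 : ∀ x, (1 : ℝ) ≤ 1 + ∑ i, (s x i) ^ 2 := by
    intro x
    have : (0:ℝ) ≤ ∑ i, (s x i) ^ 2 := Finset.sum_nonneg fun i _ => sq_nonneg _
    linarith
  -- a.e. domination at η itself
  have hdomη := hdom η hηU
  -- integrability helper
  have hImono : ∀ (h : X → ℝ), AEStronglyMeasurable h μ → (∀ᵐ x ∂μ, |h x| ≤ g x) →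
      Integrable h μ := by
    intro h hm hb
    refine hg.mono hm ?_
    filter_upwards [hb] with x hx
    exact hx.trans (le_abs_self _)
  -- componentwise integrability facts
  have habs_le : ∀ (x : X) (c : ℝ), |c| ≤ 1 + |η ⬝ᵥ s x| + |f x| → ∀ i,
      |c * s x i * Real.exp (η ⬝ᵥ s x)| ≤
        (1 + ∑ k, (s x k) ^ 2) * (1 + |η ⬝ᵥ s x| + |f x|) * Real.exp (η ⬝ᵥ s x) := by
    intro x c hc i
    have he : 0 < Real.exp (η ⬝ᵥ s x) := Real.exp_pos _
    have hsi : |s x i| ≤ 1 + ∑ k, (s x k) ^ 2 := by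
      have h1 : |s x i| ≤ 1 + (s x i) ^ 2 := by
        nlinarith [sq_nonneg (|s x i| - 1), sq_abs (s x i)]
      have h2 : (s x i) ^ 2 ≤ ∑ k, (s x k) ^ 2 :=
        Finset.single_le_sum (fun k _ => sq_nonneg (s x k)) (Finset.mem_univ i)
      linarith
    have h0 : 0 ≤ 1 + |η ⬝ᵥ s x| + |f x| := by positivity
    rw [abs_mul, abs_mul, Real.abs_exp]
    have : |c| * |s x i| ≤ (1 + ∑ k, (s x k) ^ 2) * (1 + |η ⬝ᵥ s x| + |f x|) := by
      calc |c| * |s x i| = |s x i| * |c| := mul_comm _ _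
        _ ≤ (1 + ∑ k, (s x k) ^ 2) * (1 + |η ⬝ᵥ s x| + |f x|) :=
          mul_le_mul hsi hc (abs_nonneg _) (by positivity)
    exact mul_le_mul_of_nonneg_right this he.le
  have hint_exp : Integrable (fun x => Real.exp (η ⬝ᵥ s x)) μ := by
    refine hImono _ (hmexp η).aestronglyMeasurable ?_
    filter_upwards [hdomη] with x hx
    rw [Real.abs_exp]
    have he : 0 < Real.exp (η ⬝ᵥ s x) := Real.exp_pos _
    have h0 : (1:ℝ) ≤ 1 + |η ⬝ᵥ s x| + |f x| := by
      have := abs_nonneg (η ⬝ᵥ s x); have := abs_nonneg (f x); linarith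
    calc Real.exp (η ⬝ᵥ s x) = 1 * 1 * Real.exp (η ⬝ᵥ s x) := by ring
      _ ≤ (1 + ∑ i, (s x i) ^ 2) * (1 + |η ⬝ᵥ s x| + |f x|) * Real.exp (η ⬝ᵥ s x) := by
          refine mul_le_mul_of_nonneg_right ?_ he.le
          nlinarith [hQ1 x]
      _ ≤ g x := hx
  have hint_ssE : ∀ i j, Integrable (fun x => s x i * s x j * Real.exp (η ⬝ᵥ s x)) μ := by
    intro i j
    refine hImono _ (((hmsi i).mul (hmsi j)).mul (hmexp η)).aestronglyMeasurable ?_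
    filter_upwards [hdomη] with x hx
    have he : 0 < Real.exp (η ⬝ᵥ s x) := Real.exp_pos _
    have h1 : |s x i * s x j| ≤ 1 + ∑ k, (s x k) ^ 2 := by
      rw [abs_mul]
      have hij : (s x i)^2 + (s x j)^2 ≤ 2 * ∑ k, (s x k)^2 := by
        have hi : (s x i)^2 ≤ ∑ k, (s x k)^2 :=
          Finset.single_le_sum (fun k _ => sq_nonneg (s x k)) (Finset.mem_univ i)
        have hj : (s x j)^2 ≤ ∑ k, (s x k)^2 :=
          Finset.single_le_sum (fun k _ => sq_nonneg (s x k)) (Finset.mem_univ j)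
        linarith
      nlinarith [sq_nonneg (|s x i| - |s x j|), sq_abs (s x i), sq_abs (s x j), hij,
        abs_nonneg (s x i), abs_nonneg (s x j)]
    have h0 : (1 : ℝ) ≤ 1 + |η ⬝ᵥ s x| + |f x| := by
      have := abs_nonneg (η ⬝ᵥ s x); have := abs_nonneg (f x); linarith
    calc |s x i * s x j * Real.exp (η ⬝ᵥ s x)|
        = |s x i * s x j| * Real.exp (η ⬝ᵥ s x) := by rw [abs_mul, Real.abs_exp]
      _ ≤ (1 + ∑ k, (s x k) ^ 2) * Real.exp (η ⬝ᵥ s x) :=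
          mul_le_mul_of_nonneg_right h1 he.le
      _ = (1 + ∑ k, (s x k) ^ 2) * 1 * Real.exp (η ⬝ᵥ s x) := by ring
      _ ≤ (1 + ∑ k, (s x k) ^ 2) * (1 + |η ⬝ᵥ s x| + |f x|) * Real.exp (η ⬝ᵥ s x) := by
          refine mul_le_mul_of_nonneg_right (mul_le_mul_of_nonneg_left h0 ?_) he.le
          linarith [hQ1 x]
      _ ≤ g x := hx
  have hint_fsE : ∀ i, Integrable (fun x => f x * s x i * Real.exp (η ⬝ᵥ s x)) μ := by
    intro i
    refine hImono _ ((hf.mul (hmsi i)).mul (hmexp η)).aestronglyMeasurable ?_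
    filter_upwards [hdomη] with x hx
    have h1 : |f x * s x i * Real.exp (η ⬝ᵥ s x)| =
        |f x| * |s x i| * Real.exp (η ⬝ᵥ s x) := by rw [abs_mul, abs_mul, Real.abs_exp]
    rw [h1, mul_comm (|f x|) (|s x i|)]
    refine le_trans ?_ hx
    exact mul_le_mul_of_nonneg_right
      (by
        have := habs_le x (f x) (by
          have := abs_nonneg (η ⬝ᵥ s x); linarith) i
        -- direct: |s x i| * |f x| ≤ (1+Q)(1+|ηs|+|f|)
        have hsi : |s x i| ≤ 1 + ∑ k, (s x k) ^ 2 := by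
          have h1 : |s x i| ≤ 1 + (s x i) ^ 2 := by
            nlinarith [sq_nonneg (|s x i| - 1), sq_abs (s x i)]
          have h2 : (s x i) ^ 2 ≤ ∑ k, (s x k) ^ 2 :=
            Finset.single_le_sum (fun k _ => sq_nonneg (s x k)) (Finset.mem_univ i)
          linarith
        have hfb : |f x| ≤ 1 + |η ⬝ᵥ s x| + |f x| := by
          have := abs_nonneg (η ⬝ᵥ s x); linarith
        exact mul_le_mul hsi hfb (abs_nonneg _) (by positivity))
      (Real.exp_pos _).le
  have hint_dotE : ∀ i, Integrable (fun x => (η ⬝ᵥ s x) * s x i * Real.exp (η ⬝ᵥ s x)) μ := by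
    intro i
    refine hImono _ (((hmdot η).mul (hmsi i)).mul (hmexp η)).aestronglyMeasurable ?_
    filter_upwards [hdomη] with x hx
    have h1 : |(η ⬝ᵥ s x) * s x i * Real.exp (η ⬝ᵥ s x)| =
        |(η ⬝ᵥ s x) * s x i| * Real.exp (η ⬝ᵥ s x) := by rw [abs_mul, Real.abs_exp]
    rw [h1]
    refine le_trans ?_ hx
    refine mul_le_mul_of_nonneg_right ?_ (Real.exp_pos _).le
    rw [abs_mul, mul_comm (|η ⬝ᵥ s x|) (|s x i|)]
    have hsi : |s x i| ≤ 1 + ∑ k, (s x k) ^ 2 := by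
      have h1 : |s x i| ≤ 1 + (s x i) ^ 2 := by
        nlinarith [sq_nonneg (|s x i| - 1), sq_abs (s x i)]
      have h2 : (s x i) ^ 2 ≤ ∑ k, (s x k) ^ 2 :=
        Finset.single_le_sum (fun k _ => sq_nonneg (s x k)) (Finset.mem_univ i)
      linarith
    have hfb : |η ⬝ᵥ s x| ≤ 1 + |η ⬝ᵥ s x| + |f x| := by
      have := abs_nonneg (f x); linarith
    exact mul_le_mul hsi hfb (abs_nonneg _) (by positivity)
  -- the two parametric-integral derivatives
  set F'A : (Fin m → ℝ) → X → (Fin m → ℝ) →L[ℝ] ℝ :=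
    fun y x => ((y ⬝ᵥ s x - f x + 1) * Real.exp (y ⬝ᵥ s x)) • dotCLM (s x) with hF'A
  set F'B : (Fin m → ℝ) → X → (Fin m → ℝ) →L[ℝ] ℝ :=
    fun y x => Real.exp (y ⬝ᵥ s x) • dotCLM (s x) with hF'B
  have hmeas_smul_s : ∀ (c : X → ℝ), Measurable c →
      AEStronglyMeasurable (fun x => c x • dotCLM (s x)) μ := by
    intro c hc
    have h1 : (fun x => c x • dotCLM (s x)) = fun x => dotCLM (c x • s x) := by
      funext x; rw [dotCLM_smul]
    rw [h1]
    refine continuous_dotCLM.comp_aestronglyMeasurable ?_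
    exact (measurable_pi_lambda _ fun i => hc.mul (hmsi i)).aestronglyMeasurable
  have hnormF' : ∀ (v : Fin m → ℝ) (c : ℝ), ‖c • dotCLM v‖ ≤ |c| * ((m : ℝ) * (1 + ∑ i, (v i) ^ 2)) := by
    intro v c
    refine (norm_smul_le c (dotCLM v)).trans ?_
    rw [Real.norm_eq_abs]
    exact mul_le_mul_of_nonneg_left ((norm_dotCLM_le v).trans (sum_abs_le_card_mul v)) (abs_nonneg _)
  have hboundA : ∀ᵐ x ∂μ, ∀ y ∈ Metric.ball η r, ‖F'A y x‖ ≤ (m : ℝ) * g x := by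
    filter_upwards [hdomball] with x hx y hy
    have hdb := hx y hy
    refine (hnormF' (s x) _).trans ?_
    have h1 : |(y ⬝ᵥ s x - f x + 1) * Real.exp (y ⬝ᵥ s x)| =
        |y ⬝ᵥ s x - f x + 1| * Real.exp (y ⬝ᵥ s x) := by rw [abs_mul, Real.abs_exp]
    have h2 : |y ⬝ᵥ s x - f x + 1| ≤ 1 + |y ⬝ᵥ s x| + |f x| := by
      have ha := abs_add_le (y ⬝ᵥ s x - f x) 1
      have hb := abs_sub (y ⬝ᵥ s x) (f x)
      rw [abs_one] at ha
      linarith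
    rw [h1]
    have he := (Real.exp_pos (y ⬝ᵥ s x)).le
    calc |y ⬝ᵥ s x - f x + 1| * Real.exp (y ⬝ᵥ s x) * ((m:ℝ) * (1 + ∑ i, (s x i)^2))
        = (m:ℝ) * ((1 + ∑ i, (s x i)^2) * (|y ⬝ᵥ s x - f x + 1|) * Real.exp (y ⬝ᵥ s x)) := by ring
      _ ≤ (m:ℝ) * ((1 + ∑ i, (s x i)^2) * (1 + |y ⬝ᵥ s x| + |f x|) * Real.exp (y ⬝ᵥ s x)) := by
          refine mul_le_mul_of_nonneg_left ?_ (Nat.cast_nonneg m)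
          refine mul_le_mul_of_nonneg_right (mul_le_mul_of_nonneg_left h2 ?_) he
          linarith [hQ1 x]
      _ ≤ (m:ℝ) * g x := mul_le_mul_of_nonneg_left hdb (Nat.cast_nonneg m)
  have hboundB : ∀ᵐ x ∂μ, ∀ y ∈ Metric.ball η r, ‖F'B y x‖ ≤ (m : ℝ) * g x := by
    filter_upwards [hdomball] with x hx y hy
    have hdb := hx y hy
    refine (hnormF' (s x) _).trans ?_
    rw [Real.abs_exp]
    have he := (Real.exp_pos (y ⬝ᵥ s x)).le
    have h0 : (1:ℝ) ≤ 1 + |y ⬝ᵥ s x| + |f x| := by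
      have := abs_nonneg (y ⬝ᵥ s x); have := abs_nonneg (f x); linarith
    calc Real.exp (y ⬝ᵥ s x) * ((m:ℝ) * (1 + ∑ i, (s x i)^2))
        = (m:ℝ) * ((1 + ∑ i, (s x i)^2) * 1 * Real.exp (y ⬝ᵥ s x)) := by ring
      _ ≤ (m:ℝ) * ((1 + ∑ i, (s x i)^2) * (1 + |y ⬝ᵥ s x| + |f x|) * Real.exp (y ⬝ᵥ s x)) := by
          refine mul_le_mul_of_nonneg_left ?_ (Nat.cast_nonneg m)
          refine mul_le_mul_of_nonneg_right (mul_le_mul_of_nonneg_left h0 ?_) he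
          linarith [hQ1 x]
      _ ≤ (m:ℝ) * g x := mul_le_mul_of_nonneg_left hdb (Nat.cast_nonneg m)
  have hintA0 : Integrable (fun x => Real.exp (η ⬝ᵥ s x) * (η ⬝ᵥ s x - f x)) μ := by
    refine hImono _ ((hmexp η).mul ((hmdot η).sub hf)).aestronglyMeasurable ?_
    filter_upwards [hdomη] with x hx
    have he := (Real.exp_pos (η ⬝ᵥ s x)).le
    have h1 : |Real.exp (η ⬝ᵥ s x) * (η ⬝ᵥ s x - f x)| =
        Real.exp (η ⬝ᵥ s x) * |η ⬝ᵥ s x - f x| := by rw [abs_mul, Real.abs_exp]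
    rw [h1]
    refine le_trans ?_ hx
    have h2 : |η ⬝ᵥ s x - f x| ≤ 1 + |η ⬝ᵥ s x| + |f x| := by
      have hb := abs_sub (η ⬝ᵥ s x) (f x)
      linarith
    calc Real.exp (η ⬝ᵥ s x) * |η ⬝ᵥ s x - f x|
        ≤ Real.exp (η ⬝ᵥ s x) * (1 + |η ⬝ᵥ s x| + |f x|) :=
          mul_le_mul_of_nonneg_left h2 he
      _ = 1 * (1 + |η ⬝ᵥ s x| + |f x|) * Real.exp (η ⬝ᵥ s x) := by ring
      _ ≤ (1 + ∑ i, (s x i) ^ 2) * (1 + |η ⬝ᵥ s x| + |f x|) * Real.exp (η ⬝ᵥ s x) := by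
          have h0 : (0:ℝ) ≤ (1 + |η ⬝ᵥ s x| + |f x|) * Real.exp (η ⬝ᵥ s x) := by positivity
          nlinarith [hQ1 x]
  have hA : HasFDerivAt (fun y : Fin m → ℝ => ∫ x, Real.exp (y ⬝ᵥ s x) * (y ⬝ᵥ s x - f x) ∂μ)
      (∫ x, F'A η x ∂μ) η := by
    refine hasFDerivAt_integral_of_dominated_of_fderiv_le (bound := fun x => (m : ℝ) * g x)
      (Metric.ball_mem_nhds η hr) ?_ hintA0 ?_ hboundA (hg.const_mul _) ?_
    · exact Filter.Eventually.of_forall fun y =>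
        ((hmexp y).mul ((hmdot y).sub hf)).aestronglyMeasurable
    · exact hmeas_smul_s _ (((hmdot η).sub hf).add_const 1 |>.mul (hmexp η))
    · exact Filter.Eventually.of_forall fun x y _ => hasFDerivAt_main (s x) (f x) y
  have hB : HasFDerivAt (fun y : Fin m → ℝ => ∫ x, Real.exp (y ⬝ᵥ s x) ∂μ)
      (∫ x, F'B η x ∂μ) η := by
    refine hasFDerivAt_integral_of_dominated_of_fderiv_le (bound := fun x => (m : ℝ) * g x)
      (Metric.ball_mem_nhds η hr) ?_ hint_exp ?_ hboundB (hg.const_mul _) ?_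
    · exact Filter.Eventually.of_forall fun y => (hmexp y).aestronglyMeasurable
    · exact hmeas_smul_s _ (hmexp η)
    · exact Filter.Eventually.of_forall fun x y _ => hasFDerivAt_expdot (s x) y
  have htot := (hA.add_const (∫ x, Real.exp (f x) ∂μ)).sub hB
  have huniq : dotCLM gradl = (∫ x, F'A η x ∂μ) - ∫ x, F'B η x ∂μ := hgrad.unique htot
  -- integrability of the CLM-valued integrands at η
  have hintF'A : Integrable (F'A η) μ := by
    refine (hg.const_mul ((m : ℝ))).mono
      (hmeas_smul_s _ (((hmdot η).sub hf).add_const 1 |>.mul (hmexp η))) ?_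
    filter_upwards [hboundA] with x hx
    refine (hx η (Metric.mem_ball_self hr)).trans ?_
    exact le_abs_self _
  have hintF'B : Integrable (F'B η) μ := by
    refine (hg.const_mul ((m : ℝ))).mono (hmeas_smul_s _ (hmexp η)) ?_
    filter_upwards [hboundB] with x hx
    refine (hx η (Metric.mem_ball_self hr)).trans ?_
    exact le_abs_self _
  -- component extraction
  have hcomp : ∀ i, gradl i =
      (∫ x, (η ⬝ᵥ s x - f x + 1) * Real.exp (η ⬝ᵥ s x) * s x i ∂μ)
        - ∫ x, Real.exp (η ⬝ᵥ s x) * s x i ∂μ := by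
    intro i
    have h1 := congrArg (fun T : (Fin m → ℝ) →L[ℝ] ℝ => T (Pi.single i 1)) huniq
    simp only [ContinuousLinearMap.sub_apply] at h1
    rw [dotCLM_apply, dotProduct_single, mul_one] at h1
    rw [ContinuousLinearMap.integral_apply hintF'A, ContinuousLinearMap.integral_apply hintF'B] at h1
    have hFA : ∀ x, F'A η x (Pi.single i 1) =
        (η ⬝ᵥ s x - f x + 1) * Real.exp (η ⬝ᵥ s x) * s x i := by
      intro x
      simp only [hF'A, ContinuousLinearMap.smul_apply, dotCLM_apply, dotProduct_single,
        smul_eq_mul, mul_one]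
    have hFB : ∀ x, F'B η x (Pi.single i 1) = Real.exp (η ⬝ᵥ s x) * s x i := by
      intro x
      simp only [hF'B, ContinuousLinearMap.smul_apply, dotCLM_apply, dotProduct_single,
        smul_eq_mul, mul_one]
    simpa only [hFA, hFB] using h1
  -- Z ≠ 0
  have hZ0 : Z ≠ 0 := by
    intro h
    rw [hF, h, _root_.inv_zero, zero_smul] at hFinv
    haveI : Nonempty (Fin m) := ⟨⟨0, Nat.pos_of_ne_zero (NeZero.ne m)⟩⟩
    rw [Matrix.det_zero] at hFinv
    exact one_ne_zero ((isUnit_zero_iff.mp hFinv).symm)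
  -- identify gradl with Z • (F *ᵥ η) - Z • z
  have hFη : ∀ i, (F *ᵥ η) i = Z⁻¹ * ∫ x, (η ⬝ᵥ s x) * s x i * Real.exp (η ⬝ᵥ s x) ∂μ := by
    intro i
    have hswap : ∫ x, (η ⬝ᵥ s x) * s x i * Real.exp (η ⬝ᵥ s x) ∂μ
        = ∑ j, η j * ∫ x, s x i * s x j * Real.exp (η ⬝ᵥ s x) ∂μ := by
      have h1 : ∀ x, (η ⬝ᵥ s x) * s x i * Real.exp (η ⬝ᵥ s x)
          = ∑ j, η j * (s x i * s x j * Real.exp (η ⬝ᵥ s x)) := by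
        intro x
        rw [dotProduct, Finset.sum_mul, Finset.sum_mul]
        exact Finset.sum_congr rfl fun j _ => by ring
      rw [integral_congr_ae (Filter.Eventually.of_forall h1)]
      rw [integral_finset_sum _ fun j _ => (hint_ssE i j).const_mul (η j)]
      exact Finset.sum_congr rfl fun j _ => integral_const_mul _ _
    have hmv : (F *ᵥ η) i = ∑ j, F i j * η j := by
      simp [Matrix.mulVec, dotProduct]
    rw [hmv, hswap, Finset.mul_sum]
    refine Finset.sum_congr rfl fun j _ => ?_
    rw [hF]
    simp only [Matrix.smul_apply, Matrix.of_apply, smul_eq_mul]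
    ring
  have hgradl_eq : gradl = Z • (F *ᵥ η) - Z • z := by
    funext i
    rw [hcomp i]
    have hs1' : ∫ x, (η ⬝ᵥ s x - f x + 1) * Real.exp (η ⬝ᵥ s x) * s x i ∂μ
        = (∫ x, (η ⬝ᵥ s x) * s x i * Real.exp (η ⬝ᵥ s x) ∂μ)
          - (∫ x, f x * s x i * Real.exp (η ⬝ᵥ s x) ∂μ)
          + ∫ x, Real.exp (η ⬝ᵥ s x) * s x i ∂μ := by
      have h1 : ∀ x, (η ⬝ᵥ s x - f x + 1) * Real.exp (η ⬝ᵥ s x) * s x i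
          = ((η ⬝ᵥ s x) * s x i * Real.exp (η ⬝ᵥ s x)
            - f x * s x i * Real.exp (η ⬝ᵥ s x))
            + Real.exp (η ⬝ᵥ s x) * s x i := by intro x; ring
      have hintE : Integrable (fun x => Real.exp (η ⬝ᵥ s x) * s x i) μ := by
        have he : (fun x => Real.exp (η ⬝ᵥ s x) * s x i)
            = fun x => 1 * s x i * Real.exp (η ⬝ᵥ s x) := by funext x; ring
        rw [he]
        refine hImono _ ((measurable_const.mul (hmsi i)).mul (hmexp η)).aestronglyMeasurable ?_
        filter_upwards [hdomη] with x hx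
        refine le_trans (habs_le x 1 ?_ i) hx
        have := abs_nonneg (η ⬝ᵥ s x); have := abs_nonneg (f x)
        rw [abs_one]; linarith
      have hsub : Integrable (fun x => (η ⬝ᵥ s x) * s x i * Real.exp (η ⬝ᵥ s x)
          - f x * s x i * Real.exp (η ⬝ᵥ s x)) μ := (hint_dotE i).sub (hint_fsE i)
      rw [integral_congr_ae (Filter.Eventually.of_forall h1)]
      rw [integral_add hsub hintE, integral_sub (hint_dotE i) (hint_fsE i)]
    rw [hs1']
    simp only [Pi.sub_apply, Pi.smul_apply, smul_eq_mul]
    rw [hFη i, hz]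
    simp only [Pi.smul_apply, smul_eq_mul]
    field_simp
    ring
  -- final algebra
  have hFinvF : F⁻¹ *ᵥ (F *ᵥ η) = η := by
    rw [Matrix.mulVec_mulVec, Matrix.nonsing_inv_mul F hFinv, Matrix.one_mulVec]
  have hfinal : F⁻¹ *ᵥ gradl = Z • η - Z • (F⁻¹ *ᵥ z) := by
    rw [hgradl_eq, Matrix.mulVec_sub, Matrix.mulVec_smul, Matrix.mulVec_smul, hFinvF]
  rw [hfinal]
  funext i
  simp only [Pi.add_apply, Pi.sub_apply, Pi.smul_apply, smul_eq_mul]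
  field_simp
  ring
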